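/- arXiv:2501.02653 — 2 statements merged into one kernel-verified Lean document; each statement's English description precedes it below -/
import Mathlib

section
/- Let n, d, t, ℓ be positive integers with 2 ≤ d and ℓ ≤ d, let γ ≥ 0, and let S_1,…,S_t be subsets of [n], each of size at most d. Let Z be a random vector in {0,1}^n such that for every set I ⊆ [n] with |I| ≤ ℓ, the marginal distribution of (Z_j)_{j∈I} is γ-close to the product distribution in which each coordinate equals 1 independently with probability 1/d. Then Pr[there exists i ∈ [t] with |{j ∈ S_i : Z_j = 1}| ≥ ℓ] ≤ t · C(d,ℓ) · (γ + (1/d)^ℓ). Consequently, if f = φ_1 ⊕ … ⊕ φ_t where each φ_i: {0,1}^n → {0,1} depends only on coordinates in S_i, then with probability at least 1 − t·C(d,ℓ)·(γ + (1/d)^ℓ) over Z, the following holds: for every u ∈ {0,1}^n, the function x ↦ f(y), where y_j = u_j if Z_j = 0 and y_j = x_j if Z_j = 1, is a parity (XOR) of t functions each depending on fewer than ℓ coordinates. -/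
/-- `p` is a probability distribution on a finite type. -/
def IsDist {α : Type*} [Fintype α] (p : α → ℝ) : Prop :=
  (∀ x, 0 ≤ p x) ∧ ∑ x : α, p x = 1

/-- Two distributions are `γ`-close: all events get probabilities within `γ`. -/
def CloseTo {α : Type*} [Fintype α] (p q : α → ℝ) (γ : ℝ) : Prop :=
  ∀ S : Finset α, |∑ x ∈ S, p x - ∑ x ∈ S, q x| ≤ γ

/-- Pushforward of a distribution along a map. -/
noncomputable def push {α β : Type*} [Fintype α] [DecidableEq β] (h : α → β) (p : α → ℝ) :
    β → ℝ :=
  fun y => ∑ x : α, if h x = y then p x else 0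

open Classical in
/-- Probability that all coordinates in `T` are 1 is at most `γ + (1/d)^ℓ`. -/
lemma single_event (n d ℓ : ℕ) (γ : ℝ)
    (p : (Fin n → ZMod 2) → ℝ)
    (T : Finset (Fin n)) (hT : T.card = ℓ)
    (h : CloseTo (push (fun z : Fin n → ZMod 2 => fun j : {j : Fin n // j ∈ T} => z j.1) p)
        (fun v : {j : Fin n // j ∈ T} → ZMod 2 =>
          ∏ j, (if v j = 1 then (d : ℝ)⁻¹ else 1 - (d : ℝ)⁻¹)) γ) :
    (∑ z : Fin n → ZMod 2, if ∀ j ∈ T, z j = 1 then p z else 0) ≤ γ + ((d:ℝ)⁻¹)^ℓ := by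
  have h1 := h {fun _ => 1}
  simp only [Finset.sum_singleton, if_true, Finset.prod_const, Finset.card_univ, Fintype.card_coe, hT] at h1
  have hpush : push (fun z : Fin n → ZMod 2 => fun j : {j : Fin n // j ∈ T} => z j.1) p
      (fun _ => 1)
      = ∑ z : Fin n → ZMod 2, if ∀ j ∈ T, z j = 1 then p z else 0 := by
    unfold push
    refine Finset.sum_congr rfl fun z _ => ?_
    congr 1
    simp only [eq_iff_iff, funext_iff]
    constructor
    · intro hz j hj; exact hz ⟨j, hj⟩
    · intro hz j; exact hz j.1 j.2
  rw [hpush] at h1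
  have := (abs_le.mp h1).2
  linarith

open Classical in
theorem stmt9
    (n d t ℓ : ℕ) (hn : 0 < n) (hd : 2 ≤ d) (ht : 0 < t) (hℓ : 0 < ℓ) (hℓd : ℓ ≤ d)
    (γ : ℝ) (hγ : 0 ≤ γ)
    (S : Fin t → Finset (Fin n)) (hS : ∀ i, (S i).card ≤ d)
    (p : (Fin n → ZMod 2) → ℝ) (hp : IsDist p)
    (hmarg : ∀ I : Finset (Fin n), I.card ≤ ℓ →
      CloseTo (push (fun z : Fin n → ZMod 2 => fun j : {j : Fin n // j ∈ I} => z j.1) p)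
        (fun v : {j : Fin n // j ∈ I} → ZMod 2 =>
          ∏ j, (if v j = 1 then (d : ℝ)⁻¹ else 1 - (d : ℝ)⁻¹)) γ) :
    ((∑ z : Fin n → ZMod 2,
        if ∃ i, ℓ ≤ ((S i).filter (fun j => z j = 1)).card then p z else 0)
      ≤ (t : ℝ) * (d.choose ℓ) * (γ + ((d : ℝ)⁻¹) ^ ℓ)) ∧
    (∀ (φ : Fin t → ((Fin n → ZMod 2) → ZMod 2)),
      (∀ i, ∀ x y : Fin n → ZMod 2, (∀ j ∈ S i, x j = y j) → φ i x = φ i y) →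
      1 - (t : ℝ) * (d.choose ℓ) * (γ + ((d : ℝ)⁻¹) ^ ℓ) ≤
        ∑ z : Fin n → ZMod 2,
          if (∀ u : Fin n → ZMod 2,
                ∃ ψ : Fin t → ((Fin n → ZMod 2) → ZMod 2),
                  (∀ i, ∃ J : Finset (Fin n), J.card < ℓ ∧
                    ∀ x y : Fin n → ZMod 2, (∀ j ∈ J, x j = y j) → ψ i x = ψ i y) ∧
                  (∀ x : Fin n → ZMod 2,
                    (∑ i, φ i (fun j => if z j = 0 then u j else x j)) = ∑ i, ψ i x))
            then p z else 0) := by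
  obtain ⟨hp0, hp1⟩ := hp
  set Bad : (Fin n → ZMod 2) → Prop :=
    fun z => ∃ i, ℓ ≤ ((S i).filter (fun j => z j = 1)).card with hBad
  have hγℓ : (0:ℝ) ≤ γ + ((d:ℝ)⁻¹)^ℓ := by positivity
  -- Part 1
  have part1 : (∑ z : Fin n → ZMod 2, if Bad z then p z else 0)
      ≤ (t : ℝ) * (d.choose ℓ) * (γ + ((d : ℝ)⁻¹) ^ ℓ) := by
    have step1 : (∑ z : Fin n → ZMod 2, if Bad z then p z else 0)
        ≤ ∑ z : Fin n → ZMod 2, ∑ i : Fin t, ∑ T ∈ (S i).powersetCard ℓ,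
            (if ∀ j ∈ T, z j = 1 then p z else 0) := by
      refine Finset.sum_le_sum fun z _ => ?_
      by_cases hz : Bad z
      · rw [if_pos hz]
        obtain ⟨i, hi⟩ := hz
        obtain ⟨T, hT1, hT2⟩ := Finset.exists_subset_card_eq hi
        have hTmem : T ∈ (S i).powersetCard ℓ := by
          rw [Finset.mem_powersetCard]
          exact ⟨hT1.trans (Finset.filter_subset _ _), hT2⟩
        have hTall : ∀ j ∈ T, z j = 1 := fun j hj => (Finset.mem_filter.mp (hT1 hj)).2
        calc p z = (if ∀ j ∈ T, z j = 1 then p z else 0) := by rw [if_pos hTall]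
          _ ≤ ∑ T' ∈ (S i).powersetCard ℓ, (if ∀ j ∈ T', z j = 1 then p z else 0) := by
              refine Finset.single_le_sum
                (f := fun T' => if ∀ j ∈ T', z j = 1 then p z else 0) (fun T' _ => ?_) hTmem
              split
              exacts [hp0 z, le_rfl]
          _ ≤ _ := by
              refine Finset.single_le_sum
                (f := fun i' => ∑ T' ∈ (S i').powersetCard ℓ,
                  if ∀ j ∈ T', z j = 1 then p z else 0) (fun i' _ => ?_) (Finset.mem_univ i)
              refine Finset.sum_nonneg fun T' _ => ?_
              split
              exacts [hp0 z, le_rfl]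
      · rw [if_neg hz]
        refine Finset.sum_nonneg fun i _ => Finset.sum_nonneg fun T' _ => ?_
        split_ifs
        exacts [hp0 z, le_rfl]
    have step2 : (∑ z : Fin n → ZMod 2, ∑ i : Fin t, ∑ T ∈ (S i).powersetCard ℓ,
            (if ∀ j ∈ T, z j = 1 then p z else 0))
        ≤ (t : ℝ) * (d.choose ℓ) * (γ + ((d : ℝ)⁻¹) ^ ℓ) := by
      rw [Finset.sum_comm]
      rw [Finset.sum_congr rfl fun (i : Fin t) (_ : i ∈ Finset.univ) =>
        (Finset.sum_comm (s := (Finset.univ : Finset (Fin n → ZMod 2)))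
          (t := (S i).powersetCard ℓ)
          (f := fun z T => if ∀ j ∈ T, z j = 1 then p z else 0))]
      have : ∀ i : Fin t, (∑ T ∈ (S i).powersetCard ℓ, ∑ z : Fin n → ZMod 2,
          (if ∀ j ∈ T, z j = 1 then p z else 0)) ≤ (d.choose ℓ : ℝ) * (γ + ((d : ℝ)⁻¹) ^ ℓ) := by
        intro i
        calc (∑ T ∈ (S i).powersetCard ℓ, ∑ z : Fin n → ZMod 2,
            (if ∀ j ∈ T, z j = 1 then p z else 0))
            ≤ ∑ T ∈ (S i).powersetCard ℓ, (γ + ((d : ℝ)⁻¹) ^ ℓ) := by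
              refine Finset.sum_le_sum fun T hT => ?_
              rw [Finset.mem_powersetCard] at hT
              exact single_event n d ℓ γ p T hT.2 (hmarg T (le_of_eq hT.2))
          _ = ((S i).powersetCard ℓ).card * (γ + ((d : ℝ)⁻¹) ^ ℓ) := by
              rw [Finset.sum_const, nsmul_eq_mul]
          _ ≤ (d.choose ℓ : ℝ) * (γ + ((d : ℝ)⁻¹) ^ ℓ) := by
              refine mul_le_mul_of_nonneg_right ?_ hγℓ
              rw [Finset.card_powersetCard]
              exact_mod_cast Nat.choose_le_choose ℓ (hS i)
      calc (∑ i : Fin t, ∑ T ∈ (S i).powersetCard ℓ, ∑ z : Fin n → ZMod 2,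
          (if ∀ j ∈ T, z j = 1 then p z else 0))
          ≤ ∑ _i : Fin t, (d.choose ℓ : ℝ) * (γ + ((d : ℝ)⁻¹) ^ ℓ) :=
            Finset.sum_le_sum fun i _ => this i
        _ = (t : ℝ) * (d.choose ℓ) * (γ + ((d : ℝ)⁻¹) ^ ℓ) := by
            rw [Finset.sum_const, nsmul_eq_mul]; simp [mul_assoc]
    exact step1.trans step2
  refine ⟨part1, ?_⟩
  -- Part 2
  intro φ hφ
  set Good : (Fin n → ZMod 2) → Prop :=
    fun z => (∀ u : Fin n → ZMod 2,
      ∃ ψ : Fin t → ((Fin n → ZMod 2) → ZMod 2),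
        (∀ i, ∃ J : Finset (Fin n), J.card < ℓ ∧
          ∀ x y : Fin n → ZMod 2, (∀ j ∈ J, x j = y j) → ψ i x = ψ i y) ∧
        (∀ x : Fin n → ZMod 2,
          (∑ i, φ i (fun j => if z j = 0 then u j else x j)) = ∑ i, ψ i x)) with hGood
  have key : ∀ z, ¬ Bad z → Good z := by
    intro z hz u
    simp only [hBad, not_exists, not_le] at hz
    refine ⟨fun i x => φ i (fun j => if z j = 0 then u j else x j), fun i => ?_, fun x => rfl⟩
    refine ⟨(S i).filter (fun j => z j = 1), hz i, fun x y hxy => ?_⟩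
    refine hφ i _ _ fun j hj => ?_
    by_cases hzj : z j = 0
    · simp [hzj]
    · have hz1 : z j = 1 := by
        have : ∀ a : ZMod 2, a = 0 ∨ a = 1 := by decide
        rcases this (z j) with h | h
        · exact absurd h hzj
        · exact h
      simp only [if_neg hzj]
      exact hxy j (Finset.mem_filter.mpr ⟨hj, hz1⟩)
  have hsplit : (∑ z : Fin n → ZMod 2, if Bad z then p z else 0)
      + (∑ z : Fin n → ZMod 2, if ¬ Bad z then p z else 0) = 1 := by
    rw [← Finset.sum_add_distrib, ← hp1]
    refine Finset.sum_congr rfl fun z _ => ?_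
    by_cases hz : Bad z <;> simp [hz]
  have hmono : (∑ z : Fin n → ZMod 2, if ¬ Bad z then p z else 0)
      ≤ (∑ z : Fin n → ZMod 2, if Good z then p z else 0) := by
    refine Finset.sum_le_sum fun z _ => ?_
    by_cases hz : Bad z
    · simp only [hz, not_true_eq_false, if_false]
      split_ifs
      exacts [hp0 z, le_rfl]
    · rw [if_pos hz, if_pos (key z hz)]
  linarith
end

section
/- Let n, s, ℓ be positive integers and γ ≥ 0. Let Z^{(1)},…,Z^{(s)} be independent random vectors in {0,1}^n such that for each r ∈ [s] and every set I ⊆ [n] with |I| ≤ ℓ, the marginal distribution of (Z^{(r)}_j)_{j∈I} is γ-close to the uniform distribution on {0,1}^I. Define Z ∈ {0,1}^n coordinatewise by Z_j = Z^{(1)}_j ∧ Z^{(2)}_j ∧ … ∧ Z^{(s)}_j. Then for every set I ⊆ [n] with |I| ≤ ℓ, the marginal distribution of (Z_j)_{j∈I} is (s·γ)-close to the product distribution on {0,1}^I in which each coordinate equals 1 independently with probability 2^{−s}. -/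
/-- The uniform distribution on a finite type. -/
noncomputable def unif (α : Type*) [Fintype α] : α → ℝ := fun _ => (Fintype.card α : ℝ)⁻¹

def res {n : ℕ} (I : Finset (Fin n)) (z : Fin n → Bool) : {j : Fin n // j ∈ I} → Bool :=
  fun j => z j.1

def Fmap {n s : ℕ} (I : Finset (Fin n)) (z : Fin s → (Fin n → Bool)) :
    {j : Fin n // j ∈ I} → Bool :=
  fun j => decide (∀ r : Fin s, z r j.1 = true)

noncomputable def A {n s : ℕ} (I : Finset (Fin n)) (S : Finset ({j : Fin n // j ∈ I} → Bool))
    (q : Fin s → ((Fin n → Bool) → ℝ)) : ℝ :=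
  ∑ z : Fin s → (Fin n → Bool), if Fmap I z ∈ S then ∏ r, q r (z r) else 0

lemma push_sum {α β : Type*} [Fintype α] [DecidableEq β] (h : α → β) (p : α → ℝ)
    (S : Finset β) :
    ∑ x ∈ S, push h p x = ∑ z : α, if h z ∈ S then p z else 0 := by
  unfold push
  rw [Finset.sum_comm]
  refine Finset.sum_congr rfl fun z _ => ?_
  simp [Finset.sum_ite_eq']

lemma push_restrict_unif (n : ℕ) (I : Finset (Fin n)) :
    push (fun z : Fin n → Bool => fun j : {j : Fin n // j ∈ I} => z j.1)
      (unif (Fin n → Bool)) = unif ({j : Fin n // j ∈ I} → Bool) := by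
  funext v
  unfold push unif
  rw [← (Equiv.piEquivPiSubtypeProd (fun j : Fin n => j ∈ I) (fun _ => Bool)).symm.sum_comp]
  have key : ∀ x : ({j : Fin n // j ∈ I} → Bool) × ({j : Fin n // ¬ j ∈ I} → Bool),
      (fun j : {j : Fin n // j ∈ I} =>
        (Equiv.piEquivPiSubtypeProd (fun j : Fin n => j ∈ I) (fun _ => Bool)).symm x j.1) = x.1 := by
    intro x
    funext j
    simp [Equiv.piEquivPiSubtypeProd, j.2]
  simp only [key]
  rw [Fintype.sum_prod_type]
  rw [Finset.sum_comm]
  simp only [Finset.sum_ite_eq', Finset.mem_univ, if_true, Finset.sum_const,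
    Finset.card_univ, nsmul_eq_mul]
  rw [Fintype.card_fun, Fintype.card_fun, Fintype.card_fun]
  simp only [Fintype.card_bool, Fintype.card_coe, Fintype.card_fin, Fintype.card_subtype_compl,
    Fintype.card_coe]
  have h1 : I.card ≤ n := by simpa using I.card_le_univ
  rw [eq_comm, inv_eq_iff_eq_inv, eq_comm]
  push_cast
  rw [mul_inv, inv_inv, mul_comm, ← pow_sub₀ (2:ℝ) (by norm_num) (Nat.sub_le n I.card)]
  congr 1
  omega

lemma prod_ite_zero' {ι : Type*} (t : Finset ι) (c : ι → Prop) [DecidablePred c] (f : ι → ℝ) :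
    ∏ j ∈ t, (if c j then f j else 0) = if ∀ j ∈ t, c j then ∏ j ∈ t, f j else 0 := by
  by_cases h : ∀ j ∈ t, c j
  · rw [if_pos h]; exact Finset.prod_congr rfl fun j hj => if_pos (h j hj)
  · rw [if_neg h]
    push_neg at h
    obtain ⟨j, hj, hcj⟩ := h
    exact Finset.prod_eq_zero hj (if_neg hcj)

lemma push_and_unif {n s : ℕ} (I : Finset (Fin n)) (v : {j : Fin n // j ∈ I} → Bool) :
    push (Fmap (s := s) I) (fun z : Fin s → (Fin n → Bool) =>
        ∏ r : Fin s, unif (Fin n → Bool) (z r)) v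
      = ∏ j : {j : Fin n // j ∈ I}, (if v j then ((2:ℝ)⁻¹) ^ s else 1 - ((2:ℝ)⁻¹) ^ s) := by
  classical
  unfold push unif
  rw [← (Equiv.piComm fun (_ : Fin s) (_ : Fin n) => Bool).symm.sum_comp]
  have ht : (∏ _r : Fin s, ((Fintype.card (Fin n → Bool) : ℝ))⁻¹) = ∏ _j : Fin n, ((2:ℝ)^s)⁻¹ := by
    simp only [Finset.prod_const, Finset.card_univ, Fintype.card_fin, Fintype.card_fun,
      Fintype.card_bool]
    push_cast
    rw [← inv_pow, ← inv_pow, ← pow_mul, ← pow_mul, mul_comm]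
  -- the per-coordinate condition
  set C : (j : Fin n) → (Fin s → Bool) → Prop :=
    fun j b => ∀ h : j ∈ I, decide (∀ r : Fin s, b r = true) = v ⟨j, h⟩ with hC
  have step1 : ∀ w : Fin n → (Fin s → Bool),
      (if Fmap (s := s) I ((Equiv.piComm fun (_ : Fin s) (_ : Fin n) => Bool).symm w) = v
        then ∏ _r : Fin s, ((Fintype.card (Fin n → Bool) : ℝ))⁻¹ else 0)
      = ∏ j : Fin n, (if C j (w j) then ((2:ℝ)^s)⁻¹ else 0) := by
    intro w
    rw [prod_ite_zero']
    rw [ht]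
    have hcond : (Fmap (s := s) I ((Equiv.piComm fun (_ : Fin s) (_ : Fin n) => Bool).symm w) = v)
        ↔ (∀ j ∈ Finset.univ, C j (w j)) := by
      simp only [Finset.mem_univ, true_imp_iff, hC]
      constructor
      · intro h j hj
        have := congrFun h ⟨j, hj⟩
        simp [Fmap, Equiv.piComm, Function.swap] at this ⊢
        convert this using 1
        exact decide_eq_decide.mpr Iff.rfl
      · intro h
        funext j
        have := h j.1 j.2
        simp [Fmap, Equiv.piComm, Function.swap] at this ⊢
        convert this using 1
        exact decide_eq_decide.mpr Iff.rfl
    by_cases hc : ∀ j ∈ Finset.univ, C j (w j)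
    · rw [if_pos (hcond.mpr hc), if_pos hc]
    · rw [if_neg (fun hh => hc (hcond.mp hh)), if_neg hc]
  simp only [step1]
  rw [← Fintype.piFinset_univ, ← Finset.prod_univ_sum
    (fun _ : Fin n => (Finset.univ : Finset (Fin s → Bool)))
    (fun j b => if C j b then ((2:ℝ)^s)⁻¹ else 0)]
  -- per-coordinate sums
  have step2 : ∀ j : Fin n,
      (∑ b : Fin s → Bool, if C j b then ((2:ℝ)^s)⁻¹ else 0)
      = if h : j ∈ I then (if v ⟨j, h⟩ then ((2:ℝ)⁻¹)^s else 1 - ((2:ℝ)⁻¹)^s) else 1 := by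
    intro j
    by_cases h : j ∈ I
    · rw [dif_pos h]
      have hCj : ∀ b : Fin s → Bool, C j b ↔ (decide (∀ r : Fin s, b r = true) = v ⟨j, h⟩) := by
        intro b
        simp only [hC]
        exact ⟨fun H => H h, fun H _ => H⟩
      simp only [hCj]
      by_cases hv : v ⟨j, h⟩
      · rw [if_pos hv]
        have : ∀ b : Fin s → Bool,
            (decide (∀ r : Fin s, b r = true) = true) ↔ b = (fun _ => true) := by
          intro b; simp [funext_iff]
        simp only [hv, this]
        rw [Finset.sum_ite_eq' Finset.univ (fun _ => true) (fun _ => ((2:ℝ)^s)⁻¹)]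
        simp [inv_pow]
      · simp only [Bool.not_eq_true] at hv
        rw [if_neg (by simp [hv])]
        have : ∀ b : Fin s → Bool,
            (decide (∀ r : Fin s, b r = true) = false) ↔ ¬ (b = (fun _ => true)) := by
          intro b; simp [funext_iff]
        simp only [hv, this]
        have split : ∀ b : Fin s → Bool,
            (if ¬ (b = (fun _ => true)) then ((2:ℝ)^s)⁻¹ else 0)
            = ((2:ℝ)^s)⁻¹ - (if b = (fun _ => true) then ((2:ℝ)^s)⁻¹ else 0) := by
          intro b; by_cases hb : b = (fun _ => true) <;> simp [hb]
        simp only [split]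
        rw [Finset.sum_sub_distrib, Finset.sum_const, Finset.card_univ]
        rw [Finset.sum_ite_eq' Finset.univ (fun _ => true) (fun _ => ((2:ℝ)^s)⁻¹)]
        simp [Fintype.card_fun, inv_pow, mul_inv_cancel₀]
    · rw [dif_neg h]
      have hCj : ∀ b : Fin s → Bool, C j b := by
        intro b hh; exact absurd hh h
      rw [Finset.sum_congr rfl fun b _ => if_pos (hCj b)]
      rw [Finset.sum_const, Finset.card_univ]
      simp [Fintype.card_fun, mul_inv_cancel₀]
  simp only [step2]
  calc (∏ x : Fin n,
        if h : x ∈ I then (if v ⟨x, h⟩ = true then (2:ℝ)⁻¹ ^ s else 1 - (2:ℝ)⁻¹ ^ s) else 1)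
      = ∏ x ∈ I,
        if h : x ∈ I then (if v ⟨x, h⟩ = true then (2:ℝ)⁻¹ ^ s else 1 - (2:ℝ)⁻¹ ^ s) else 1 :=
        (Finset.prod_subset I.subset_univ (fun j _ hj => dif_neg hj)).symm
    _ = ∏ j : {j : Fin n // j ∈ I},
        if h : j.1 ∈ I then (if v ⟨j.1, h⟩ = true then (2:ℝ)⁻¹ ^ s else 1 - (2:ℝ)⁻¹ ^ s) else 1 :=
        Finset.prod_subtype I (fun _ => Iff.rfl) _
    _ = ∏ j : {j : Fin n // j ∈ I}, (if v j = true then (2:ℝ)⁻¹ ^ s else 1 - (2:ℝ)⁻¹ ^ s) :=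
        Finset.prod_congr rfl fun j _ => by rw [dif_pos j.2]

section step
variable {n s : ℕ} (I : Finset (Fin n)) (S : Finset ({j : Fin n // j ∈ I} → Bool))

lemma step (q q' : Fin s → ((Fin n → Bool) → ℝ)) (k : Fin s)
    (hagree : ∀ r, r ≠ k → q' r = q r)
    (hd : ∀ r, IsDist (q r))
    (hk' : q' k = unif (Fin n → Bool))
    {γ : ℝ}
    (hclose : CloseTo (push (res I) (q k)) (unif ({j : Fin n // j ∈ I} → Bool)) γ) :
    |A I S q - A I S q'| ≤ γ := by
  classical
  set e := Equiv.piSplitAt k (fun _ : Fin s => (Fin n → Bool)) with he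
  -- decompose the sum
  have decomp : ∀ (Q : Fin s → ((Fin n → Bool) → ℝ)),
      A I S Q = ∑ y : {r : Fin s // r ≠ k} → (Fin n → Bool),
        (∏ r : {r : Fin s // r ≠ k}, Q r.1 (y r)) *
        ∑ x ∈ Finset.univ.filter
            (fun v : {j : Fin n // j ∈ I} → Bool =>
              (fun j => (decide (∀ r : {r : Fin s // r ≠ k}, y r j.1 = true)) && v j) ∈ S),
          push (res I) (Q k) x := by
    intro Q
    unfold A
    rw [← e.symm.sum_comp, Fintype.sum_prod_type, Finset.sum_comm]
    refine Finset.sum_congr rfl fun y _ => ?_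
    have hsymm : ∀ (w : Fin n → Bool) (r : Fin s),
        e.symm (w, y) r = if h : r = k then w else y ⟨r, h⟩ := by
      intro w r
      rw [he, Equiv.piSplitAt_symm_apply]
      split
      · rename_i h; subst h; rfl
      · rfl
    have hF : ∀ w : Fin n → Bool,
        Fmap I (e.symm (w, y)) =
          fun j : {j : Fin n // j ∈ I} =>
            (decide (∀ r : {r : Fin s // r ≠ k}, y r j.1 = true)) && res I w j := by
      intro w
      funext j
      have hiff : (∀ r : Fin s, e.symm (w, y) r j.1 = true) ↔
          ((∀ r : {r : Fin s // r ≠ k}, y r j.1 = true) ∧ w j.1 = true) := by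
        constructor
        · intro h
          refine ⟨fun r => ?_, ?_⟩
          · have := h r.1
            rwa [hsymm, dif_neg r.2] at this
          · have := h k
            rwa [hsymm, dif_pos rfl] at this
        · rintro ⟨h1, h2⟩ r
          rw [hsymm]
          split
          · exact h2
          · exact h1 ⟨r, by assumption⟩
      show decide (∀ r : Fin s, e.symm (w, y) r j.1 = true) = _
      rw [decide_eq_decide.mpr hiff, Bool.decide_and]
      simp [res]
    have hP : ∀ (Q : Fin s → ((Fin n → Bool) → ℝ)) (w : Fin n → Bool),
        (∏ r : Fin s, Q r (e.symm (w, y) r)) =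
          Q k w * ∏ r : {r : Fin s // r ≠ k}, Q r.1 (y r) := by
      intro Q w
      rw [Fintype.prod_eq_mul_prod_compl k]
      congr 1
      · rw [hsymm, dif_pos rfl]
      · rw [Finset.prod_subtype (p := fun r : Fin s => r ≠ k) ({k}ᶜ : Finset (Fin s))
          (by simp) (fun r => Q r (e.symm (w, y) r))]
        refine Finset.prod_congr rfl fun r _ => ?_
        rw [hsymm, dif_neg r.2]
    rw [push_sum (res I) (Q k), Finset.mul_sum]
    refine Finset.sum_congr rfl fun w _ => ?_
    rw [hF w, hP Q w]
    by_cases hmem : (fun j : {j : Fin n // j ∈ I} =>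
        (decide (∀ r : {r : Fin s // r ≠ k}, y r j.1 = true)) && res I w j) ∈ S
    · rw [if_pos hmem, if_pos (by simpa using hmem), mul_comm]
    · rw [if_neg hmem, if_neg (by simpa using hmem), mul_zero]
  have hW : ∀ y : {r : Fin s // r ≠ k} → (Fin n → Bool),
      (∏ r : {r : Fin s // r ≠ k}, q' r.1 (y r)) = ∏ r : {r : Fin s // r ≠ k}, q r.1 (y r) :=
    fun y => Finset.prod_congr rfl fun r _ => by rw [hagree r.1 r.2]
  have hU : push (res I) (q' k) = unif ({j : Fin n // j ∈ I} → Bool) := by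
    rw [hk']
    exact push_restrict_unif n I
  have hWnn : ∀ y : {r : Fin s // r ≠ k} → (Fin n → Bool),
      0 ≤ ∏ r : {r : Fin s // r ≠ k}, q r.1 (y r) :=
    fun y => Finset.prod_nonneg fun r _ => (hd r.1).1 _
  have hWsum : ∑ y : {r : Fin s // r ≠ k} → (Fin n → Bool),
      ∏ r : {r : Fin s // r ≠ k}, q r.1 (y r) = 1 := by
    rw [← Fintype.piFinset_univ, ← Finset.prod_univ_sum]
    simp only [(fun r : {r : Fin s // r ≠ k} => (hd r.1).2)]
    exact Finset.prod_const_one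
  rw [decomp q, decomp q']
  simp only [hW, hU]
  rw [← Finset.sum_sub_distrib]
  simp only [← mul_sub]
  refine le_trans (Finset.abs_sum_le_sum_abs _ _) ?_
  have hb : ∀ y : {r : Fin s // r ≠ k} → (Fin n → Bool),
      |(∏ r : {r : Fin s // r ≠ k}, q r.1 (y r)) *
        ((∑ x ∈ Finset.univ.filter
            (fun v : {j : Fin n // j ∈ I} → Bool =>
              (fun j => (decide (∀ r : {r : Fin s // r ≠ k}, y r j.1 = true)) && v j) ∈ S),
          push (res I) (q k) x) -
         ∑ x ∈ Finset.univ.filter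
            (fun v : {j : Fin n // j ∈ I} → Bool =>
              (fun j => (decide (∀ r : {r : Fin s // r ≠ k}, y r j.1 = true)) && v j) ∈ S),
          unif ({j : Fin n // j ∈ I} → Bool) x)|
        ≤ (∏ r : {r : Fin s // r ≠ k}, q r.1 (y r)) * γ := by
    intro y
    rw [abs_mul, abs_of_nonneg (hWnn y)]
    exact mul_le_mul_of_nonneg_left (hclose _) (hWnn y)
  refine le_trans (Finset.sum_le_sum fun y _ => hb y) ?_
  rw [← Finset.sum_mul, hWsum, one_mul]



theorem stmt12
    (n s ℓ : ℕ) (hn : 0 < n) (hs : 0 < s) (hℓ : 0 < ℓ)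
    (γ : ℝ) (hγ : 0 ≤ γ)
    (p : Fin s → ((Fin n → Bool) → ℝ)) (hdist : ∀ r, IsDist (p r))
    (hmarg : ∀ r : Fin s, ∀ I : Finset (Fin n), I.card ≤ ℓ →
      CloseTo
        (push (fun z : Fin n → Bool => fun j : {j : Fin n // j ∈ I} => z j.1) (p r))
        (unif ({j : Fin n // j ∈ I} → Bool)) γ) :
    ∀ I : Finset (Fin n), I.card ≤ ℓ →
      CloseTo
        (push
          (fun z : Fin s → (Fin n → Bool) =>
            fun j : {j : Fin n // j ∈ I} => decide (∀ r : Fin s, z r j.1 = true))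
          (fun z : Fin s → (Fin n → Bool) => ∏ r, p r (z r)))
        (fun v : {j : Fin n // j ∈ I} → Bool =>
          ∏ j, (if v j then ((2:ℝ)⁻¹) ^ s else 1 - ((2:ℝ)⁻¹) ^ s))
        (s * γ) := by
  intro I hI S
  classical
  set Q : ℕ → Fin s → ((Fin n → Bool) → ℝ) :=
    fun m r => if (r : ℕ) < m then unif (Fin n → Bool) else p r with hQ
  have hunif : IsDist (unif (Fin n → Bool)) := by
    constructor
    · intro x; unfold unif; positivity
    · unfold unif
      rw [Finset.sum_const, Finset.card_univ, nsmul_eq_mul, mul_inv_cancel₀]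
      exact Nat.cast_ne_zero.mpr Fintype.card_ne_zero
  have hQd : ∀ m r, IsDist (Q m r) := by
    intro m r
    simp only [hQ]
    split
    · exact hunif
    · exact hdist r
  have key : ∀ m, m ≤ s → |A I S (Q 0) - A I S (Q m)| ≤ (m : ℝ) * γ := by
    intro m
    induction m with
    | zero => intro _; simp
    | succ m ih =>
      intro hm1
      have hm : m < s := hm1
      have hstep : |A I S (Q m) - A I S (Q (m + 1))| ≤ γ := by
        refine step I S (Q m) (Q (m + 1)) ⟨m, hm⟩ ?_ (hQd m) ?_ ?_
        · intro r hr
          have hne : (r : ℕ) ≠ m := fun hh => hr (Fin.ext hh)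
          simp only [hQ]
          by_cases h2 : (r : ℕ) < m
          · rw [if_pos h2, if_pos (by omega)]
          · rw [if_neg h2, if_neg (by omega)]
        · simp only [hQ]
          rw [if_pos (by simp)]
        · have hqk : Q m ⟨m, hm⟩ = p ⟨m, hm⟩ := by
            simp only [hQ]
            rw [if_neg (by simp)]
          rw [hqk]
          exact hmarg ⟨m, hm⟩ I hI
      calc |A I S (Q 0) - A I S (Q (m + 1))|
          ≤ |A I S (Q 0) - A I S (Q m)| + |A I S (Q m) - A I S (Q (m + 1))| :=
            abs_sub_le _ _ _
        _ ≤ (m : ℝ) * γ + γ := add_le_add (ih hm.le) hstep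
        _ = ((m + 1 : ℕ) : ℝ) * γ := by push_cast; ring
  have h0 : A I S (Q 0) =
      ∑ x ∈ S, push
        (fun z : Fin s → (Fin n → Bool) =>
          fun j : {j : Fin n // j ∈ I} => decide (∀ r : Fin s, z r j.1 = true))
        (fun z : Fin s → (Fin n → Bool) => ∏ r, p r (z r)) x := by
    have hQ0 : Q 0 = p := funext fun r => by simp [hQ]
    rw [hQ0, push_sum]
    rfl
  have htop : A I S (Q s) =
      ∑ x ∈ S, ∏ j, (if x j then ((2:ℝ)⁻¹) ^ s else 1 - ((2:ℝ)⁻¹) ^ s) := by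
    have hQs : Q s = fun _ => unif (Fin n → Bool) := funext fun r => by simp [hQ, r.isLt]
    rw [hQs]
    have : A (s := s) I S (fun _ => unif (Fin n → Bool)) =
        ∑ x ∈ S, push (Fmap (s := s) I)
          (fun z : Fin s → (Fin n → Bool) => ∏ r : Fin s, unif (Fin n → Bool) (z r)) x := by
      rw [push_sum]
      rfl
    rw [this]
    exact Finset.sum_congr rfl fun x _ => push_and_unif I x
  have := key s le_rfl
  rw [h0, htop] at this
  exact this
end step
end
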